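/- arXiv:2208.09101 — 2 statements merged into one kernel-verified Lean document; each statement's English description precedes it below -/
import Mathlib

section
/- Suppose S = {ε_1 X_{u_1}, …, ε_M X_{u_M}}, with ε_r ∈ {1, −1} and u_r : Fin N → ZMod 2, is an independent set of stabilizers on N qubits whose elements are all signed products of Pauli X operators. Then there exist v_1, …, v_{N−M} : Fin N → ZMod 2 such that S ∪ {Z_{v_1}, …, Z_{v_{N−M}}} is a complete independent set of stabilizers on N qubits. -/
noncomputable section

/-- The space of operators (matrices) on the `N`-qubit Hilbert space. -/
abbrev QMat (N : ℕ) := Matrix (Fin N → Fin 2) (Fin N → Fin 2) ℂ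

def pauliSx : Matrix (Fin 2) (Fin 2) ℂ := !![0, 1; 1, 0]
def pauliSy : Matrix (Fin 2) (Fin 2) ℂ := !![0, -Complex.I; Complex.I, 0]
def pauliSz : Matrix (Fin 2) (Fin 2) ℂ := !![1, 0; 0, -1]

/-- A Pauli operator on `N` qubits: a ±1-signed tensor product of single-qubit
Pauli matrices `1, σx, σy, σz`. -/
def IsPauli {N : ℕ} (M : QMat N) : Prop :=
  ∃ (ε : ℂ) (P : Fin N → Matrix (Fin 2) (Fin 2) ℂ),
    (ε = 1 ∨ ε = -1) ∧
    (∀ j, P j = 1 ∨ P j = pauliSx ∨ P j = pauliSy ∨ P j = pauliSz) ∧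
    ∀ s t, M s t = ε * ∏ j, P j (s j) (t j)

/-- A set of stabilizers: pairwise commuting Pauli operators whose generated
multiplicative group (equivalently, monoid, since each element is an involution)
does not contain `-1`. -/
def IsStabilizerSet {N : ℕ} (S : Set (QMat N)) : Prop :=
  (∀ M ∈ S, IsPauli M) ∧
  (∀ M ∈ S, ∀ M' ∈ S, M * M' = M' * M) ∧
  (-1 : QMat N) ∉ Submonoid.closure S

/-- An independent set of stabilizers: the product of every nonempty finite subset
(encoded as a nodup list of elements of `S`) is not a complex scalar multiple of
the identity matrix. -/
def IsIndependentSet {N : ℕ} (S : Set (QMat N)) : Prop :=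
  IsStabilizerSet S ∧
  ∀ L : List (QMat N), L ≠ [] → L.Nodup → (∀ A ∈ L, A ∈ S) →
    ∀ c : ℂ, L.prod ≠ c • (1 : QMat N)

/-- A complete independent set of stabilizers: an independent set with exactly `N` elements. -/
def IsCompleteSet {N : ℕ} (S : Set (QMat N)) : Prop :=
  IsIndependentSet S ∧ S.ncard = N

/-- The (sign `+1`) product of Pauli-`X` operators: `σx` at positions where `u j = 1`,
identity elsewhere. -/
def XopF {N : ℕ} (u : Fin N → ZMod 2) : QMat N :=
  Matrix.of fun s t => ∏ j, (if u j = 1 then pauliSx else 1) (s j) (t j)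

/-- The (sign `+1`) product of Pauli-`Z` operators: `σz` at positions where `v j = 1`,
identity elsewhere. -/
def ZopF {N : ℕ} (v : Fin N → ZMod 2) : QMat N :=
  Matrix.of fun s t => ∏ j, (if v j = 1 then pauliSz else 1) (s j) (t j)


namespace Stab

/-- sign character `ZMod 2 → ℂ` -/
def sgn (z : ZMod 2) : ℂ := if z = 0 then 1 else -1

lemma sgn_zero : sgn 0 = 1 := rfl
lemma sgn_ne_zero (z : ZMod 2) : sgn z ≠ 0 := by
  unfold sgn; split_ifs <;> norm_num
lemma zmod2_cases (z : ZMod 2) : z = 0 ∨ z = 1 := by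
  have h : ∀ w : ZMod 2, w = 0 ∨ w = 1 := by decide
  exact h z
lemma zmod2_add_self (z : ZMod 2) : z + z = 0 := by fin_cases z <;> decide
lemma sgn_add (x y : ZMod 2) : sgn (x + y) = sgn x * sgn y := by
  have h1 : (1 : ZMod 2) ≠ 0 := by decide
  rcases zmod2_cases x with hx | hx <;> rcases zmod2_cases y with hy | hy <;>
      subst hx <;> subst hy
  · simp [sgn]
  · simp [sgn, h1]
  · simp [sgn, h1]
  · rw [show (1 + 1 : ZMod 2) = 0 by decide]
    simp [sgn, h1]

lemma sgn_inj : Function.Injective sgn := by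
  intro x y h
  have h1 : (1 : ZMod 2) ≠ 0 := by decide
  rcases zmod2_cases x with rfl | rfl <;> rcases zmod2_cases y with rfl | rfl
  · rfl
  · norm_num [sgn, h1] at h
  · norm_num [sgn, h1] at h
  · rfl

variable {N : ℕ}

/-- dot product on `Fin N → ZMod 2` -/
def dot (a b : Fin N → ZMod 2) : ZMod 2 := ∑ j, a j * b j

lemma dot_comm (a b : Fin N → ZMod 2) : dot a b = dot b a := by
  unfold dot; exact Finset.sum_congr rfl fun j _ => mul_comm _ _

lemma dot_zero_left (b : Fin N → ZMod 2) : dot 0 b = 0 := by simp [dot]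
lemma dot_zero_right (a : Fin N → ZMod 2) : dot a 0 = 0 := by simp [dot]
lemma dot_add_left (a a' b : Fin N → ZMod 2) : dot (a + a') b = dot a b + dot a' b := by
  simp [dot, add_mul, Finset.sum_add_distrib]
lemma dot_add_right (a b b' : Fin N → ZMod 2) : dot a (b + b') = dot a b + dot a b' := by
  simp [dot, mul_add, Finset.sum_add_distrib]
lemma dot_single (a : Fin N → ZMod 2) (j : Fin N) : dot a (Pi.single j 1) = a j := by
  simp only [dot, Pi.single_apply, mul_ite, mul_one, mul_zero]
  rw [Finset.sum_ite_eq' Finset.univ]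
  simp

def chi (b a : Fin N → ZMod 2) : ℂ := sgn (dot b a)

lemma chi_ne_zero (b a : Fin N → ZMod 2) : chi b a ≠ 0 := sgn_ne_zero _
lemma chi_zero_left (a : Fin N → ZMod 2) : chi 0 a = 1 := by simp [chi, dot_zero_left, sgn_zero]
lemma chi_zero_right (b : Fin N → ZMod 2) : chi b 0 = 1 := by simp [chi, dot_zero_right, sgn_zero]
lemma chi_add_left (b b' a : Fin N → ZMod 2) : chi (b+b') a = chi b a * chi b' a := by
  simp [chi, dot_add_left, sgn_add]
lemma chi_add_right (b a a' : Fin N → ZMod 2) : chi b (a+a') = chi b a * chi b a' := by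
  simp [chi, dot_add_right, sgn_add]

/-- convert index -/
def ι (s : Fin N → Fin 2) : Fin N → ZMod 2 := fun j => s j

lemma ι_inj : Function.Injective (ι (N := N)) := fun s t h => h

def e : (Fin N → Fin 2) ≃ (Fin N → ZMod 2) := Equiv.refl _

lemma ι_e_symm (a : Fin N → ZMod 2) : ι (e.symm a) = a := rfl

/-- canonical signed X·Z Pauli product -/
def P (c : ℂ) (a b : Fin N → ZMod 2) : QMat N :=
  Matrix.of fun s t => if ι t = ι s + a then c * chi b (ι t) else 0

lemma P_apply (c : ℂ) (a b : Fin N → ZMod 2) (s t : Fin N → Fin 2) :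
    P c a b s t = if ι t = ι s + a then c * chi b (ι t) else 0 := rfl

lemma P_smul (c d : ℂ) (a b : Fin N → ZMod 2) : c • P d a b = P (c * d) a b := by
  ext s t
  simp only [Matrix.smul_apply, P_apply, smul_eq_mul, mul_ite, mul_zero, mul_assoc]

lemma P_one : P (N := N) 1 0 0 = 1 := by
  ext s t
  simp only [P_apply, add_zero, chi_zero_left, mul_one, Matrix.one_apply]
  have : ι t = ι s ↔ s = t := ⟨fun h => (ι_inj h).symm, fun h => by rw [h]⟩
  rw [if_congr this rfl rfl, eq_comm]

lemma P_mul (c d : ℂ) (a b a' b' : Fin N → ZMod 2) :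
    P c a b * P d a' b' = P (c * d * chi b a') (a + a') (b + b') := by
  ext s t
  rw [Matrix.mul_apply]
  have key : ∀ k : Fin N → Fin 2,
      P c a b s k * P d a' b' k t
        = if k = e.symm (ι s + a) then P c a b s k * P d a' b' k t else 0 := by
    intro k
    by_cases hk : k = e.symm (ι s + a)
    · simp [hk]
    · have : ι k ≠ ι s + a := fun h => hk (ι_inj (by rw [h]; rfl))
      simp [P_apply, this]
  rw [Finset.sum_congr rfl fun k _ => key k, Finset.sum_ite_eq' Finset.univ]
  simp only [Finset.mem_univ, if_true]
  by_cases ht : ι t = ι s + (a + a')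
  · have hself : (fun j => a' j + a' j) = (0 : Fin N → ZMod 2) := by
      funext j; exact zmod2_add_self _
    have h3 : ι s + a = ι t + a' := by
      rw [ht, show ι s + (a + a') + a' = (ι s + a) + (a' + a') by abel,
        show a' + a' = 0 from hself, add_zero]
    simp only [P_apply, ι_e_symm, if_pos rfl, if_pos ht,
      if_pos (show ι t = ι s + a + a' by rw [ht, add_assoc])]
    simp only [if_true]
    rw [h3, chi_add_right, chi_add_left]
    have h5 : ι t = ι t + a' + a' := by rw [add_assoc, show a' + a' = 0 from hself, add_zero]
    erw [if_pos h5]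
    ring
  · have h2 : ¬ (ι t = ι (e.symm (ι s + a)) + a') := by
      rw [ι_e_symm]; rw [add_assoc] at *; exact ht
    simp [P_apply, h2, ht]

end Stab

namespace Stab

variable {N : ℕ}

lemma add_self_fun (a : Fin N → ZMod 2) : a + a = 0 := by
  funext j; exact zmod2_add_self _

lemma P_c00 (c : ℂ) : P (N := N) c 0 0 = c • (1 : QMat N) := by
  rw [← P_one (N := N), P_smul, mul_one]

lemma P_eq_smul_one {c c' : ℂ} {a b : Fin N → ZMod 2} (hc : c ≠ 0)
    (h : P c a b = c' • (1 : QMat N)) : a = 0 ∧ b = 0 ∧ c = c' := by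
  have ha : a = 0 := by
    by_contra hne
    have h1 := congrFun (congrFun h (e.symm 0)) (e.symm a)
    rw [P_apply,
      if_pos (show ι (e.symm a) = ι (e.symm (0 : Fin N → ZMod 2)) + a by
        rw [ι_e_symm, ι_e_symm, zero_add])] at h1
    have hne2 : (e.symm (0 : Fin N → ZMod 2)) ≠ e.symm a :=
      fun hh => hne (e.symm.injective hh).symm
    rw [Matrix.smul_apply, Matrix.one_apply_ne hne2, smul_zero] at h1
    exact mul_ne_zero hc (chi_ne_zero _ _) h1
  subst ha
  have hcc : c = c' := by
    have h1 := congrFun (congrFun h (e.symm 0)) (e.symm 0)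
    rw [P_apply, if_pos (by rw [add_zero]), ι_e_symm, chi_zero_right, mul_one,
      Matrix.smul_apply, Matrix.one_apply_eq, smul_eq_mul, mul_one] at h1
    exact h1
  refine ⟨rfl, ?_, hcc⟩
  funext j
  have h1 := congrFun (congrFun h (e.symm (Pi.single j 1))) (e.symm (Pi.single j 1))
  rw [P_apply, if_pos (by rw [add_zero]), ι_e_symm,
    Matrix.smul_apply, Matrix.one_apply_eq, smul_eq_mul, mul_one] at h1
  rw [show chi b (Pi.single j 1) = sgn (b j) by rw [chi, dot_single], ← hcc] at h1
  have hs : sgn (b j) = sgn 0 := by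
    rw [sgn_zero]
    field_simp at h1
    exact h1
  exact sgn_inj hs

lemma P_injective {c d : ℂ} {a b a' b' : Fin N → ZMod 2} (hc : c ≠ 0) (hd : d ≠ 0)
    (h : P c a b = P d a' b') : a = a' ∧ b = b' ∧ c = d := by
  have ha : a = a' := by
    have h1 := congrFun (congrFun h (e.symm 0)) (e.symm a)
    rw [P_apply, P_apply,
      if_pos (show ι (e.symm a) = ι (e.symm (0 : Fin N → ZMod 2)) + a by
        rw [ι_e_symm, ι_e_symm, zero_add])] at h1
    by_contra hne
    have : ι (e.symm a) ≠ ι (e.symm (0 : Fin N → ZMod 2)) + a' := by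
      rw [ι_e_symm, ι_e_symm, zero_add]; exact hne
    rw [if_neg this] at h1
    exact mul_ne_zero hc (chi_ne_zero _ _) h1
  subst ha
  have key : ∀ x : Fin N → ZMod 2, c * chi b x = d * chi b' x := by
    intro x
    have h1 := congrFun (congrFun h (e.symm (x + a))) (e.symm x)
    have hcond : ι (e.symm x) = ι (e.symm (x + a)) + a := by
      rw [ι_e_symm, ι_e_symm, add_assoc, add_self_fun, add_zero]
    rw [P_apply, P_apply, if_pos hcond, if_pos hcond, ι_e_symm] at h1
    exact h1
  have hcd : c = d := by
    have := key 0
    rwa [chi_zero_right, chi_zero_right, mul_one, mul_one] at this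
  refine ⟨rfl, ?_, hcd⟩
  funext j
  have h1 := key (Pi.single j 1)
  rw [show chi b (Pi.single j 1) = sgn (b j) by rw [chi, dot_single],
    show chi b' (Pi.single j 1) = sgn (b' j) by rw [chi, dot_single], ← hcd] at h1
  exact sgn_inj (mul_left_cancel₀ hc h1)

/-- single-qubit X factor -/
lemma xfac (w : ZMod 2) (x y : Fin 2) :
    (if w = 1 then pauliSx else 1) x y
      = if (show ZMod 2 from y) = (show ZMod 2 from x) + w then 1 else 0 := by
  rcases zmod2_cases w with hw | hw <;> subst hw <;> fin_cases x <;> fin_cases y <;> rfl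

lemma XopF_eq (u : Fin N → ZMod 2) : XopF u = P 1 u 0 := by
  ext s t
  show (∏ j, (if u j = 1 then pauliSx else 1) (s j) (t j)) = _
  rw [Finset.prod_congr rfl fun j _ => xfac (u j) (s j) (t j)]
  rw [Fintype.prod_boole]
  rw [P_apply, chi_zero_left, mul_one]
  have hiff : (∀ i, (show ZMod 2 from t i) = (show ZMod 2 from s i) + u i) ↔ ι t = ι s + u :=
    ⟨fun h => funext h, fun h i => congrFun h i⟩
  simp only [hiff]

/-- single-qubit Z factor -/
lemma zfac (w : ZMod 2) (x y : Fin 2) :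
    (if w = 1 then pauliSz else 1) x y
      = if y = x then sgn (w * (show ZMod 2 from x)) else 0 := by
  rcases zmod2_cases w with hw | hw <;> subst hw <;> fin_cases x <;> fin_cases y <;>
    simp [pauliSz, Matrix.one_apply, sgn, show (1 + 1 : ZMod 2) = 0 by decide,
      show (1 : ZMod 2) ≠ 0 by decide, show (0 : ZMod 2) ≠ 1 by decide] <;>
      intro h <;> exfalso <;> revert h <;> decide

lemma prod_ite_delta (f : Fin N → ℂ) (s t : Fin N → Fin 2) :
    ∏ j, (if t j = s j then f j else 0) = if t = s then ∏ j, f j else 0 := by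
  by_cases h : t = s
  · subst h; simp
  · rw [if_neg h]
    obtain ⟨j, hj⟩ := Function.ne_iff.mp h
    exact Finset.prod_eq_zero (Finset.mem_univ j) (if_neg hj)

lemma sgn_sum {α : Type*} (s : Finset α) (f : α → ZMod 2) :
    sgn (∑ j ∈ s, f j) = ∏ j ∈ s, sgn (f j) := by
  classical
  induction s using Finset.induction with
  | empty => simp [sgn_zero]
  | @insert a s h ih => rw [Finset.sum_insert h, Finset.prod_insert h, sgn_add, ih]

lemma ZopF_eq (v : Fin N → ZMod 2) : ZopF v = P 1 0 v := by
  ext s t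
  show (∏ j, (if v j = 1 then pauliSz else 1) (s j) (t j)) = _
  rw [Finset.prod_congr rfl fun j _ => zfac (v j) (s j) (t j)]
  rw [prod_ite_delta]
  rw [P_apply, one_mul]
  have hiff : t = s ↔ ι t = ι s + 0 := by
    rw [add_zero]
    exact ⟨fun h => by rw [h], fun h => ι_inj h⟩
  simp only [hiff]
  by_cases h : ι t = ι s + 0
  · rw [if_pos h, if_pos h]
    have hts : ι t = ι s := by rw [h, add_zero]
    rw [chi, dot, hts]
    exact (sgn_sum Finset.univ (fun j => v j * ι s j)).symm
  · rw [if_neg h, if_neg h]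

end Stab

namespace Stab

variable {N : ℕ}

lemma eps_pow_ne_zero {ε : ℂ} (hε : ε = 1 ∨ ε = -1) (n : ℕ) : ε ^ n ≠ 0 := by
  rcases hε with h | h <;> subst h <;> norm_num

lemma eps_pow_add {ε : ℂ} (hε : ε = 1 ∨ ε = -1) (x y : ZMod 2) :
    ε ^ (x + y).val = ε ^ x.val * ε ^ y.val := by
  have h2 : ε ^ 2 = 1 := by rcases hε with h | h <;> subst h <;> norm_num
  rcases zmod2_cases x with hx | hx <;> rcases zmod2_cases y with hy | hy <;>
      subst hx <;> subst hy <;>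
    simp [show ((0 : ZMod 2) + 0).val = 0 by decide, show ((0 : ZMod 2) + 1).val = 1 by decide,
      show ((1 : ZMod 2) + 0).val = 1 by decide, show ((1 : ZMod 2) + 1).val = 0 by decide,
      show (0 : ZMod 2).val = 0 by decide, show (1 : ZMod 2).val = 1 by decide]
  rw [← h2]; ring

lemma chi_list_sum (b : Fin N → ZMod 2) (l : List (Fin N → ZMod 2))
    (h : ∀ a ∈ l, chi b a = 1) : chi b l.sum = 1 := by
  induction l with
  | nil => exact chi_zero_right b
  | cons a l ih =>
      rw [List.sum_cons, chi_add_right, h a (List.mem_cons_self),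
        ih fun x hx => h x (List.mem_cons_of_mem a hx), one_mul]

lemma list_prod_P (l : List (ℂ × (Fin N → ZMod 2) × (Fin N → ZMod 2)))
    (H : ∀ d ∈ l, ∀ d' ∈ l, chi d.2.2 d'.2.1 = 1) :
    (l.map fun d => P d.1 d.2.1 d.2.2).prod
      = P (l.map fun d => d.1).prod (l.map fun d => d.2.1).sum (l.map fun d => d.2.2).sum := by
  induction l with
  | nil => simp [P_one]
  | cons d l ih =>
      simp only [List.map_cons, List.prod_cons, List.sum_cons]
      rw [ih fun x hx y hy => H x (List.mem_cons_of_mem d hx) y (List.mem_cons_of_mem d hy),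
        P_mul]
      rw [chi_list_sum d.2.2 (l.map fun d' => d'.2.1) ?_, mul_one]
      · intro a ha
        obtain ⟨d', hd', rfl⟩ := List.mem_map.mp ha
        exact H d (List.mem_cons_self) d' (List.mem_cons_of_mem d hd')

lemma prod_update_pow {M : ℕ} (ε : Fin M → ℂ) (m : Fin M → ZMod 2) (r₀ : Fin M)
    (h : m r₀ = 0) :
    ∏ r, ε r ^ (Function.update m r₀ 1 r).val = ε r₀ * ∏ r, ε r ^ (m r).val := by
  classical
  rw [← Finset.mul_prod_erase Finset.univ (fun r => ε r ^ (Function.update m r₀ 1 r).val)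
      (Finset.mem_univ r₀),
    ← Finset.mul_prod_erase Finset.univ (fun r => ε r ^ (m r).val) (Finset.mem_univ r₀)]
  rw [Finset.prod_congr rfl fun r hr => by
    rw [Function.update_of_ne (Finset.ne_of_mem_erase hr)]]
  rw [Function.update_self, h]
  simp [show (1 : ZMod 2).val = 1 by decide, show (0 : ZMod 2).val = 0 by decide, mul_assoc]

lemma sum_update_smul {M : ℕ} {V : Type*} [AddCommMonoid V] [Module (ZMod 2) V]
    (w : Fin M → V) (m : Fin M → ZMod 2) (r₀ : Fin M) (h : m r₀ = 0) :
    ∑ r, (Function.update m r₀ 1 r) • w r = w r₀ + ∑ r, m r • w r := by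
  classical
  rw [← Finset.add_sum_erase Finset.univ (fun r => Function.update m r₀ 1 r • w r)
      (Finset.mem_univ r₀),
    ← Finset.add_sum_erase Finset.univ (fun r => m r • w r) (Finset.mem_univ r₀)]
  rw [Finset.sum_congr rfl fun r hr => by
    rw [Function.update_of_ne (Finset.ne_of_mem_erase hr)]]
  rw [Function.update_self, h]
  simp [add_assoc]

/-- dot product as a linear map in the second variable -/
def dotL (w : Fin N → ZMod 2) : (Fin N → ZMod 2) →ₗ[ZMod 2] ZMod 2 where
  toFun x := dot w x
  map_add' x y := dot_add_right w x y
  map_smul' c x := by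
    simp only [RingHom.id_apply, smul_eq_mul, dot, Finset.mul_sum, Pi.smul_apply]
    exact Finset.sum_congr rfl fun j _ => by ring

lemma finset_prod_XP {M : ℕ} (ε : Fin M → ℂ) (u : Fin M → (Fin N → ZMod 2)) (T : Finset (Fin M)) :
    (T.toList.map fun r => P (ε r) (u r) 0).prod = P (∏ r ∈ T, ε r) (∑ r ∈ T, u r) 0 := by
  rw [show (T.toList.map fun r => P (ε r) (u r) 0)
      = ((T.toList.map fun r => ((ε r, u r, 0) : ℂ × (Fin N → ZMod 2) × (Fin N → ZMod 2))).map
          fun d => P d.1 d.2.1 d.2.2) by rw [List.map_map]; rfl]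
  rw [list_prod_P]
  · rw [List.map_map, List.map_map, List.map_map]
    rw [show List.map ((fun d : ℂ × (Fin N → ZMod 2) × (Fin N → ZMod 2) => d.1) ∘
          fun r => (ε r, u r, 0)) T.toList = T.toList.map ε from rfl,
      show List.map ((fun d : ℂ × (Fin N → ZMod 2) × (Fin N → ZMod 2) => d.2.1) ∘
          fun r => (ε r, u r, 0)) T.toList = T.toList.map u from rfl,
      show List.map ((fun d : ℂ × (Fin N → ZMod 2) × (Fin N → ZMod 2) => d.2.2) ∘
          fun r => (ε r, u r, 0)) T.toList = T.toList.map (fun _ => (0 : Fin N → ZMod 2)) from rfl,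
      Finset.prod_map_toList, Finset.sum_map_toList, Finset.sum_map_toList, Finset.sum_const_zero]
  · intro d hd d' hd'
    obtain ⟨r, _, rfl⟩ := List.mem_map.mp hd
    exact chi_zero_left _

end Stab


open Stab

/-- an independent set of stabilizers consisting of signed products of
Pauli-`X` operators can be completed by `N - M` products of Pauli-`Z` operators. -/
theorem statement4 (N M : ℕ) (hN : 0 < N)
    (ε : Fin M → ℂ) (hε : ∀ r, ε r = 1 ∨ ε r = -1)
    (u : Fin M → (Fin N → ZMod 2))
    (hinj : Function.Injective fun r => ε r • XopF (u r))
    (hind : IsIndependentSet (Set.range fun r => ε r • XopF (u r))) :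
    ∃ v : Fin (N - M) → (Fin N → ZMod 2),
      IsCompleteSet
        ((Set.range fun r => ε r • XopF (u r)) ∪
          (Set.range fun r => ZopF (v r))) := by
  classical
  obtain ⟨⟨hPauli, hcommX, hneg⟩, hindep⟩ := hind
  set gX : Fin M → QMat N := fun r => ε r • XopF (u r) with hgX_def
  have hgXP : ∀ r, gX r = P (ε r) (u r) 0 := fun r => by
    show ε r • XopF (u r) = _
    rw [XopF_eq, P_smul, mul_one]
  have hεne : ∀ r, ε r ≠ 0 := fun r => by
    rcases hε r with h | h <;> rw [h] <;> norm_num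
  have hval0 : ((0 : ZMod 2)).val = 0 := rfl
  have hzne : (0 : ZMod 2) ≠ 1 := by decide
  -- sum over filter = weighted sum
  have hfilter_sum : ∀ (m : Fin M → ZMod 2),
      ∑ r ∈ Finset.univ.filter (fun r => m r = 1), u r = ∑ r, m r • u r := by
    intro m
    rw [Finset.sum_filter]
    refine Finset.sum_congr rfl fun r _ => ?_
    rcases zmod2_cases (m r) with h | h <;> rw [h] <;> simp [hzne]
  -- the X-generators are linearly independent as vectors
  have hu_li : LinearIndependent (ZMod 2) u := by
    rw [Fintype.linearIndependent_iff]
    intro m hm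
    by_contra hcon
    push_neg at hcon
    obtain ⟨r₀, hr₀⟩ := hcon
    have hr₀1 : m r₀ = 1 := (zmod2_cases (m r₀)).resolve_left hr₀
    set T : Finset (Fin M) := Finset.univ.filter fun r => m r = 1 with hT
    have hr₀T : r₀ ∈ T := by simp [hT, hr₀1]
    set L : List (QMat N) := T.toList.map fun r => P (ε r) (u r) 0 with hL
    have hLprod : L.prod = (∏ r ∈ T, ε r) • 1 := by
      rw [hL, finset_prod_XP, hfilter_sum, hm, P_c00]
    refine hindep L ?_ ?_ ?_ _ hLprod
    · intro hnil
      exact Finset.Nonempty.toList_ne_nil ⟨r₀, hr₀T⟩ (List.map_eq_nil_iff.mp hnil)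
    · refine List.Nodup.map ?_ T.nodup_toList
      intro r r' h
      apply hinj
      show gX r = gX r'
      rw [hgXP, hgXP]; exact h
    · intro A hA
      obtain ⟨r, _, rfl⟩ := List.mem_map.mp hA
      exact ⟨r, hgXP r⟩
  have hu_ne : ∀ r, u r ≠ 0 := fun r => hu_li.ne_zero r
  have hMN : M ≤ N := by
    have h1 := hu_li.fintype_card_le_finrank
    simpa [Module.finrank_fintype_fun_eq_card] using h1
  -- construct the Z-vectors
  set Φ : (Fin N → ZMod 2) →ₗ[ZMod 2] (Fin M → ZMod 2) :=
    LinearMap.pi fun r => dotL (u r) with hΦ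
  have hrank : N - M ≤ Module.finrank (ZMod 2) (LinearMap.ker Φ) := by
    have h1 := LinearMap.finrank_range_add_finrank_ker Φ
    rw [Module.finrank_fintype_fun_eq_card, Fintype.card_fin] at h1
    have h2 : Module.finrank (ZMod 2) (LinearMap.range Φ) ≤ M := by
      have h3 := Submodule.finrank_le (LinearMap.range Φ)
      rwa [Module.finrank_fintype_fun_eq_card, Fintype.card_fin] at h3
    omega
  set B := Module.finBasis (ZMod 2) (LinearMap.ker Φ) with hB
  set v : Fin (N - M) → (Fin N → ZMod 2) :=
    fun s => (B (Fin.castLE hrank s) : Fin N → ZMod 2) with hv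
  have hv_ker : ∀ s, v s ∈ LinearMap.ker Φ := fun s => (B (Fin.castLE hrank s)).2
  have hv_li : LinearIndependent (ZMod 2) v := by
    have h1 : LinearIndependent (ZMod 2) fun s : Fin (N - M) => B (Fin.castLE hrank s) :=
      B.linearIndependent.comp _ (Fin.castLE_injective _)
    exact h1.map' (LinearMap.ker Φ).subtype (Submodule.ker_subtype _)
  have hdotuv : ∀ r s, dot (u r) (v s) = 0 := by
    intro r s
    have h1 := hv_ker s
    rw [LinearMap.mem_ker] at h1
    exact congrFun h1 r
  refine ⟨v, ?_⟩
  set gZ : Fin (N - M) → QMat N := fun s => ZopF (v s) with hgZ_def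
  have hgZP : ∀ s, gZ s = P 1 0 (v s) := fun s => ZopF_eq (v s)
  have hchiVU : ∀ s r, chi (v s) (u r) = 1 := fun s r => by
    rw [chi, dot_comm, hdotuv, sgn_zero]
  set W' : Submodule (ZMod 2) (Fin N → ZMod 2) :=
    Submodule.span (ZMod 2) (Set.range v) with hW'
  have hWU : ∀ b ∈ W', ∀ r, dot b (u r) = 0 := by
    intro b hb r
    have hle : W' ≤ LinearMap.ker (dotL (u r)) := by
      rw [hW', Submodule.span_le]
      rintro x ⟨s, rfl⟩
      exact LinearMap.mem_ker.mpr (hdotuv r s)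
    have h1 := hle hb
    rw [LinearMap.mem_ker] at h1
    rw [dot_comm]; exact h1
  have hchiWU : ∀ b ∈ W', ∀ (m : Fin M → ZMod 2), chi b (∑ r, m r • u r) = 1 := by
    intro b hb m
    have h1 : dot b (∑ r, m r • u r) = 0 := by
      show dotL b (∑ r, m r • u r) = 0
      rw [map_sum]
      refine Finset.sum_eq_zero fun r _ => ?_
      rw [map_smul]
      show m r • dot b (u r) = 0
      rw [hWU b hb r, smul_zero]
    rw [chi, h1, sgn_zero]
  have hvW : ∀ s, v s ∈ W' := fun s => Submodule.subset_span ⟨s, rfl⟩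
  have hchiVsum : ∀ s (m : Fin M → ZMod 2), chi (v s) (∑ r, m r • u r) = 1 :=
    fun s m => hchiWU (v s) (hvW s) m
  -- basic injectivity / disjointness
  have hgX_inj : Function.Injective gX := hinj
  have hgZ_inj : Function.Injective gZ := by
    intro s s' h
    rw [hgZP, hgZP] at h
    obtain ⟨-, hb, -⟩ := P_injective one_ne_zero one_ne_zero h
    exact hv_li.injective hb
  have hXZ : ∀ r s, gX r ≠ gZ s := by
    intro r s h
    rw [hgXP, hgZP] at h
    obtain ⟨ha, -, -⟩ := P_injective (hεne r) one_ne_zero h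
    exact hu_ne r ha
  -- prod of zero multiplicities
  have hprod0 : (∏ r, ε r ^ ((0 : Fin M → ZMod 2) r).val) = 1 :=
    Finset.prod_eq_one fun r _ => by rw [Pi.zero_apply, hval0, pow_zero]
  have hsum0u : (∑ r, (0 : Fin M → ZMod 2) r • u r) = 0 :=
    Finset.sum_eq_zero fun r _ => by rw [Pi.zero_apply, zero_smul]
  have hsum0v : (∑ s, (0 : Fin (N - M) → ZMod 2) s • v s) = 0 :=
    Finset.sum_eq_zero fun s _ => by rw [Pi.zero_apply, zero_smul]
  -- the master decomposition lemma
  have master : ∀ L : List (QMat N), L.Nodup →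
      (∀ A ∈ L, A ∈ Set.range gX ∪ Set.range gZ) →
      ∃ (mx : Fin M → ZMod 2) (mz : Fin (N - M) → ZMod 2),
        L.prod = P (∏ r, ε r ^ (mx r).val) (∑ r, mx r • u r) (∑ s, mz s • v s)
        ∧ (∀ r, mx r = 1 ↔ gX r ∈ L) ∧ (∀ s, mz s = 1 ↔ gZ s ∈ L) := by
    intro L
    induction L with
    | nil =>
        intro _ _
        refine ⟨0, 0, ?_, ?_, ?_⟩
        · rw [List.prod_nil, hprod0, hsum0u, hsum0v, P_one]
        · intro r
          simp [hzne]
        · intro s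
          simp [hzne]
    | cons A L ih =>
        intro hnd hmem
        have hndL : L.Nodup := (List.nodup_cons.mp hnd).2
        have hAnot : A ∉ L := (List.nodup_cons.mp hnd).1
        obtain ⟨mx, mz, hprod, hx, hz⟩ :=
          ih hndL (fun B hB => hmem B (List.mem_cons_of_mem A hB))
        rcases hmem A (List.mem_cons_self) with ⟨r₀, rfl⟩ | ⟨s₀, rfl⟩
        · have hmx0 : mx r₀ = 0 := by
            rcases zmod2_cases (mx r₀) with h | h
            · exact h
            · exact absurd ((hx r₀).mp h) hAnot
          refine ⟨Function.update mx r₀ 1, mz, ?_, ?_, ?_⟩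
          · rw [List.prod_cons, hprod, hgXP, P_mul, chi_zero_left, mul_one, zero_add,
              prod_update_pow ε mx r₀ hmx0, sum_update_smul u mx r₀ hmx0]
          · intro r
            by_cases hr : r = r₀
            · subst hr
              simp [Function.update_self, List.mem_cons]
            · rw [Function.update_of_ne hr, List.mem_cons, hx r]
              constructor
              · exact Or.inr
              · rintro (h | h)
                · exact absurd (hgX_inj h) hr
                · exact h
          · intro s
            rw [List.mem_cons, hz s]
            constructor
            · exact Or.inr
            · rintro (h | h)
              · exact (hXZ r₀ s h.symm).elim
              · exact h
        · have hmz0 : mz s₀ = 0 := by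
            rcases zmod2_cases (mz s₀) with h | h
            · exact h
            · exact absurd ((hz s₀).mp h) hAnot
          refine ⟨mx, Function.update mz s₀ 1, ?_, ?_, ?_⟩
          · rw [List.prod_cons, hprod, hgZP, P_mul, hchiVsum s₀ mx, mul_one, one_mul, zero_add,
              sum_update_smul v mz s₀ hmz0]
          · intro r
            rw [List.mem_cons, hx r]
            constructor
            · exact Or.inr
            · rintro (h | h)
              · exact (hXZ r s₀ h).elim
              · exact h
          · intro s
            by_cases hs : s = s₀
            · subst hs
              simp [Function.update_self, List.mem_cons]
            · rw [Function.update_of_ne hs, List.mem_cons, hz s]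
              constructor
              · exact Or.inr
              · rintro (h | h)
                · exact absurd (hgZ_inj h) hs
                · exact h
  -- pairwise commutation
  have hcomm : ∀ A ∈ Set.range gX ∪ Set.range gZ, ∀ A' ∈ Set.range gX ∪ Set.range gZ,
      A * A' = A' * A := by
    rintro A (⟨r, rfl⟩ | ⟨s, rfl⟩) A' (⟨r', rfl⟩ | ⟨s', rfl⟩)
    · rw [hgXP, hgXP, P_mul, P_mul, chi_zero_left, chi_zero_left,
        mul_comm (ε r) (ε r'), add_comm (u r) (u r')]
    · rw [hgXP, hgZP, P_mul, P_mul, chi_zero_left, hchiVU s' r]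
      simp only [mul_one, one_mul, add_zero, zero_add]
    · rw [hgZP, hgXP, P_mul, P_mul, chi_zero_left, hchiVU s r']
      simp only [mul_one, one_mul, add_zero, zero_add]
    · rw [hgZP, hgZP, P_mul, P_mul, chi_zero_right, chi_zero_right,
        add_comm (v s) (v s')]
  -- Pauli property
  have hpauli : ∀ A ∈ Set.range gX ∪ Set.range gZ, IsPauli A := by
    rintro A (hA | ⟨s, rfl⟩)
    · exact hPauli A hA
    · refine ⟨1, fun j => if v s j = 1 then pauliSz else 1, Or.inl rfl, fun j => ?_, fun a b => ?_⟩
      · by_cases h : v s j = 1 <;> simp [h]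
      · rw [one_mul]; rfl
  -- -1 not in the closure
  have hnegU : (-1 : QMat N) ∉ Submonoid.closure (Set.range gX ∪ Set.range gZ) := by
    intro hmem
    set Gs : Submonoid (QMat N) :=
      { carrier := {A | ∃ (m : Fin M → ZMod 2) (b : Fin N → ZMod 2), b ∈ W' ∧
          A = P (∏ r, ε r ^ (m r).val) (∑ r, m r • u r) b}
        one_mem' := ⟨0, 0, zero_mem _, by rw [hprod0, hsum0u, P_one]⟩
        mul_mem' := by
          rintro A A' ⟨m1, b1, hb1, rfl⟩ ⟨m2, b2, hb2, rfl⟩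
          refine ⟨m1 + m2, b1 + b2, add_mem hb1 hb2, ?_⟩
          have hc : (∏ r, ε r ^ (m1 r).val) * (∏ r, ε r ^ (m2 r).val)
              = ∏ r, ε r ^ ((m1 + m2) r).val := by
            rw [← Finset.prod_mul_distrib]
            exact Finset.prod_congr rfl fun r _ => (eps_pow_add (hε r) _ _).symm
          have haa : (∑ r, m1 r • u r) + (∑ r, m2 r • u r) = ∑ r, (m1 + m2) r • u r := by
            rw [← Finset.sum_add_distrib]
            exact Finset.sum_congr rfl fun r _ => (add_smul _ _ _).symm
          rw [P_mul, hchiWU b1 hb1 m2, mul_one, hc, haa] } with hGs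
    have hSsub : (Set.range gX ∪ Set.range gZ) ⊆ Gs := by
      rintro A (⟨r, rfl⟩ | ⟨s, rfl⟩)
      · refine ⟨Function.update 0 r 1, 0, zero_mem _, ?_⟩
        rw [hgXP r, prod_update_pow ε 0 r rfl, sum_update_smul u 0 r rfl,
          hprod0, hsum0u, mul_one, add_zero]
      · exact ⟨0, v s, hvW s, by rw [hgZP, hprod0, hsum0u]⟩
    obtain ⟨m, b, hb, heq⟩ := Submonoid.closure_le.mpr hSsub hmem
    have hC : (∏ r, ε r ^ (m r).val) ≠ 0 :=
      Finset.prod_ne_zero_iff.mpr fun r _ => eps_pow_ne_zero (hε r) _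
    have h1 : P (∏ r, ε r ^ (m r).val) (∑ r, m r • u r) b = (-1 : ℂ) • 1 := by
      rw [← heq, neg_smul, one_smul]
    obtain ⟨hA0, hB0, hCval⟩ := P_eq_smul_one hC h1
    have hm0 : ∀ r, m r = 0 := Fintype.linearIndependent_iff.mp hu_li m hA0
    have h2 : (∏ r, ε r ^ (m r).val) = 1 := by
      refine Finset.prod_eq_one fun r _ => ?_
      rw [hm0 r, hval0, pow_zero]
    rw [h2] at hCval
    norm_num at hCval
  -- independence of the union
  have hindepU : ∀ L : List (QMat N), L ≠ [] → L.Nodup →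
      (∀ A ∈ L, A ∈ Set.range gX ∪ Set.range gZ) →
      ∀ c : ℂ, L.prod ≠ c • (1 : QMat N) := by
    intro L hne hnd hmem c hLprod
    obtain ⟨mx, mz, hprod, hx, hz⟩ := master L hnd hmem
    rw [hprod] at hLprod
    have hC : (∏ r, ε r ^ (mx r).val) ≠ 0 :=
      Finset.prod_ne_zero_iff.mpr fun r _ => eps_pow_ne_zero (hε r) _
    obtain ⟨hA0, hB0, -⟩ := P_eq_smul_one hC hLprod
    have hmz0 : ∀ s, mz s = 0 := Fintype.linearIndependent_iff.mp hv_li mz hB0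
    by_cases hmx : ∀ r, mx r = 0
    · obtain ⟨A, L', rfl⟩ := List.exists_cons_of_ne_nil hne
      rcases hmem A (List.mem_cons_self) with ⟨r, rfl⟩ | ⟨s, rfl⟩
      · have h1 := (hx r).mpr (List.mem_cons_self)
        rw [hmx r] at h1
        exact hzne h1
      · have h1 := (hz s).mpr (List.mem_cons_self)
        rw [hmz0 s] at h1
        exact hzne h1
    · push_neg at hmx
      obtain ⟨r₀, hr₀⟩ := hmx
      have hr₀1 : mx r₀ = 1 := (zmod2_cases (mx r₀)).resolve_left hr₀
      set T : Finset (Fin M) := Finset.univ.filter fun r => mx r = 1 with hT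
      have hr₀T : r₀ ∈ T := by simp [hT, hr₀1]
      set L2 : List (QMat N) := T.toList.map fun r => P (ε r) (u r) 0 with hL2
      have hL2prod : L2.prod = (∏ r ∈ T, ε r) • 1 := by
        rw [hL2, finset_prod_XP, hfilter_sum, hA0, P_c00]
      refine hindep L2 ?_ ?_ ?_ _ hL2prod
      · intro hnil
        exact Finset.Nonempty.toList_ne_nil ⟨r₀, hr₀T⟩ (List.map_eq_nil_iff.mp hnil)
      · refine List.Nodup.map ?_ T.nodup_toList
        intro r r' h
        apply hgX_inj
        rw [hgXP, hgXP]; exact h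
      · intro A hA
        obtain ⟨r, _, rfl⟩ := List.mem_map.mp hA
        exact ⟨r, hgXP r⟩
  -- cardinality
  have hdisj : Disjoint (Set.range gX) (Set.range gZ) := by
    rw [Set.disjoint_left]
    rintro A ⟨r, rfl⟩ ⟨s, hs⟩
    exact hXZ r s hs.symm
  have hcard : (Set.range gX ∪ Set.range gZ).ncard = N := by
    rw [Set.ncard_union_eq hdisj (Set.finite_range _) (Set.finite_range _)]
    have h1 : (Set.range gX).ncard = M := by
      rw [← Nat.card_coe_set_eq, Nat.card_congr (Equiv.ofInjective gX hgX_inj).symm,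
        Nat.card_eq_fintype_card, Fintype.card_fin]
    have h2 : (Set.range gZ).ncard = N - M := by
      rw [← Nat.card_coe_set_eq, Nat.card_congr (Equiv.ofInjective gZ hgZ_inj).symm,
        Nat.card_eq_fintype_card, Fintype.card_fin]
    omega
  exact ⟨⟨⟨hpauli, hcomm, hnegU⟩, hindepU⟩, hcard⟩
end
end

section
/- Let (ι, A, I, z, x) be a GI datum and (ι', A, I, z', x') a Kramers–Wannier dual datum for it. Then the symmetric sector L₀ is invariant under all the operators Z_{z α} and X_{x i}, the dual symmetric sector L₀' is invariant under all the operators Z_{z' α} and X_{x' i}, and there exists a ℂ-linear, inner-product-preserving isomorphism f : L₀ → L₀' such that f(Z_{z α} ψ) = Z_{z' α} f(ψ) for all α ∈ A and ψ ∈ L₀, and f(X_{x i} ψ) = X_{x' i} f(ψ) for all i ∈ I and ψ ∈ L₀. -/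
noncomputable section

/-- The `ZMod 2`-valued dot product `u·v = ∑ j, u j * v j`. -/
def dotp {ι : Type} [Fintype ι] (u v : ι → ZMod 2) : ZMod 2 := ∑ j, u j * v j

/-- The X-type Pauli operator `X_u`: the permutation matrix with
`(X_u)_{s,t} = 1` iff `s = t + u`. -/
def Xop {ι : Type} [Fintype ι] (u : ι → ZMod 2) :
    Matrix (ι → ZMod 2) (ι → ZMod 2) ℂ :=
  Matrix.of fun s t => if s = t + u then 1 else 0

/-- The Z-type Pauli operator `Z_v`: the diagonal matrix with
`(Z_v)_{s,s} = (-1)^(v·s)`. -/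
def Zop {ι : Type} [Fintype ι] (v : ι → ZMod 2) :
    Matrix (ι → ZMod 2) (ι → ZMod 2) ℂ :=
  Matrix.of fun s t => if s = t then (-1 : ℂ) ^ (dotp v s).val else 0

/-- The standard inner product on the `ι`-qubit Hilbert space `(ι → ZMod 2) → ℂ`. -/
def qInner {ι : Type} [Fintype ι] [DecidableEq ι] (ψ φ : (ι → ZMod 2) → ℂ) : ℂ :=
  ∑ s, (starRingEnd ℂ) (ψ s) * φ s

/-- The subspace of vectors fixed by every operator in a given set of matrices. -/
def fixedSpace {ι : Type} [Fintype ι] [DecidableEq ι]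
    (Ms : Set (Matrix (ι → ZMod 2) (ι → ZMod 2) ℂ)) :
    Submodule ℂ ((ι → ZMod 2) → ℂ) :=
  ⨅ M ∈ Ms, LinearMap.ker (Matrix.mulVecLin M - LinearMap.id)
/-- The symmetric sector `L₀` of a GI datum `(ι, A, I, z, x)`: vectors fixed by every
Z-type symmetry `Z_v` (`v·(x i) = 0` for all `i`) and every compatible X-type symmetry
`X_u` (`u·(z α) = 0` for all `α`, and `u·v = 0` for every `v` with `v·(x i) = 0` for all `i`). -/
def giL0 (ι A I : Type) [Fintype ι] [DecidableEq ι] [Fintype A] [Fintype I]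
    (z : A → ι → ZMod 2) (x : I → ι → ZMod 2) : Submodule ℂ ((ι → ZMod 2) → ℂ) :=
  fixedSpace
    ({M | ∃ v : ι → ZMod 2, (∀ i, dotp v (x i) = 0) ∧ M = Zop v} ∪
     {M | ∃ u : ι → ZMod 2, (∀ α, dotp u (z α) = 0) ∧
        (∀ v : ι → ZMod 2, (∀ i, dotp v (x i) = 0) → dotp u v = 0) ∧ M = Xop u})

/-- The dual symmetric sector `L₀'` of a dual datum `(ι', A, I, z', x')`: vectors fixed
by every X-type symmetry `X_{u'}` (`u'·(z' α) = 0` for all `α`) and every compatible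
Z-type symmetry `Z_{v'}` (`v'` in the span of the `z' α` and `v'·(x' i) = 0` for all `i`). -/
def dualL0 (ι' A I : Type) [Fintype ι'] [DecidableEq ι'] [Fintype A] [Fintype I]
    (z' : A → ι' → ZMod 2) (x' : I → ι' → ZMod 2) : Submodule ℂ ((ι' → ZMod 2) → ℂ) :=
  fixedSpace
    ({M | ∃ u' : ι' → ZMod 2, (∀ α, dotp u' (z' α) = 0) ∧ M = Xop u'} ∪
     {M | ∃ v' : ι' → ZMod 2, v' ∈ Submodule.span (ZMod 2) (Set.range z') ∧
        (∀ i, dotp v' (x' i) = 0) ∧ M = Zop v'})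


lemma dotp_comm {ι : Type} [Fintype ι] (u v : ι → ZMod 2) : dotp u v = dotp v u := by
  simp [dotp, mul_comm]

lemma dotp_add_right {ι : Type} [Fintype ι] (v s t : ι → ZMod 2) :
    dotp v (s + t) = dotp v s + dotp v t := by
  simp [dotp, mul_add, Finset.sum_add_distrib]

lemma dotp_sum_left {ι κ : Type} [Fintype ι] [Fintype κ] (f : κ → ι → ZMod 2) (t : ι → ZMod 2) :
    dotp (∑ k, f k) t = ∑ k, dotp (f k) t := by
  simp only [dotp, Finset.sum_apply, Finset.sum_mul]
  exact Finset.sum_comm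

lemma dotp_smul_left {ι : Type} [Fintype ι] (a : ZMod 2) (v t : ι → ZMod 2) :
    dotp (a • v) t = a * dotp v t := by
  simp [dotp, Finset.mul_sum, mul_assoc]

lemma zmod2_cases (a : ZMod 2) : a = 0 ∨ a = 1 := by revert a; decide

lemma sep_lemma {κ : Type} [Fintype κ] (S : Set (κ → ZMod 2)) (s : κ → ZMod 2)
    (h : s ∉ Submodule.span (ZMod 2) S) :
    ∃ v : κ → ZMod 2, (∀ w ∈ S, dotp v w = 0) ∧ dotp v s ≠ 0 := by
  classical
  obtain ⟨f, hfs, hmap⟩ :=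
    (Submodule.span (ZMod 2) S).exists_dual_map_eq_bot_of_notMem h inferInstance
  refine ⟨fun j => f (Pi.single j 1), ?_, ?_⟩
  · intro w hw
    have hw' : f w = 0 := by
      have : f w ∈ (Submodule.span (ZMod 2) S).map f := ⟨w, Submodule.subset_span hw, rfl⟩
      rwa [hmap, Submodule.mem_bot] at this
    calc dotp (fun j => f (Pi.single j 1)) w = f w := ?_
      _ = 0 := hw'
    rw [dotp]
    have hw2 : w = ∑ j, w j • Pi.single j 1 := by
      funext k; simp [Pi.single_apply, Finset.sum_apply]
    conv_rhs => rw [hw2]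
    rw [map_sum]
    exact Finset.sum_congr rfl fun j _ => by rw [map_smul, smul_eq_mul, mul_comm]
  · have : dotp (fun j => f (Pi.single j 1)) s = f s := by
      rw [dotp]
      have hs2 : s = ∑ j, s j • Pi.single j 1 := by
        funext k; simp [Pi.single_apply, Finset.sum_apply]
      conv_rhs => rw [hs2]
      rw [map_sum]
      exact Finset.sum_congr rfl fun j _ => by rw [map_smul, smul_eq_mul, mul_comm]
    rw [this]; exact hfs



lemma add_add_self {ι : Type} (s u : ι → ZMod 2) : s + u + u = s := by
  funext j
  have : ∀ a b : ZMod 2, a + b + b = a := by decide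
  simp [this]

lemma Zop_mulVec {ι : Type} [Fintype ι] [DecidableEq ι] (v : ι → ZMod 2)
    (ψ : (ι → ZMod 2) → ℂ) (s : ι → ZMod 2) :
    (Zop v).mulVec ψ s = (-1 : ℂ) ^ (dotp v s).val * ψ s := by
  classical
  simp [Zop, Matrix.mulVec, dotProduct, ite_mul, Finset.sum_ite_eq]

lemma Xop_mulVec' {ι : Type} [Fintype ι] [DecidableEq ι] (u : ι → ZMod 2)
    (ψ : (ι → ZMod 2) → ℂ) (s : ι → ZMod 2) :
    (Xop u).mulVec ψ s = ψ (s + u) := by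
  classical
  rw [Matrix.mulVec, dotProduct]
  rw [Finset.sum_eq_single (s + u)]
  · simp [Xop, add_add_self]
  · intro t _ ht
    have : s ≠ t + u := by
      intro h; apply ht; rw [h, add_add_self]
    simp [Xop, this]
  · simp

lemma Zop_fixed_iff {ι : Type} [Fintype ι] [DecidableEq ι] (v : ι → ZMod 2)
    (ψ : (ι → ZMod 2) → ℂ) :
    (Zop v).mulVec ψ = ψ ↔ ∀ s, dotp v s ≠ 0 → ψ s = 0 := by
  constructor
  · intro h s hs
    have h1 : dotp v s = 1 := by
      have := (by decide : ∀ a : ZMod 2, a = 0 ∨ a = 1) (dotp v s)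
      tauto
    have := congrFun h s
    rw [Zop_mulVec, h1] at this
    simp only [ZMod.val_one, pow_one, neg_one_mul] at this
    linear_combination -this / 2
  · intro h
    funext s
    rw [Zop_mulVec]
    rcases (by decide : ∀ a : ZMod 2, a = 0 ∨ a = 1) (dotp v s) with h0 | h1
    · simp [h0]
    · rw [h s (by rw [h1]; decide), mul_zero]

lemma Xop_fixed_iff {ι : Type} [Fintype ι] [DecidableEq ι] (u : ι → ZMod 2)
    (ψ : (ι → ZMod 2) → ℂ) :
    (Xop u).mulVec ψ = ψ ↔ ∀ s, ψ (s + u) = ψ s := by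
  constructor
  · intro h s; have := congrFun h s; rwa [Xop_mulVec'] at this
  · intro h; funext s; rw [Xop_mulVec']; exact h s

lemma mem_fixedSpace_iff {ι : Type} [Fintype ι] [DecidableEq ι]
    (Ms : Set (Matrix (ι → ZMod 2) (ι → ZMod 2) ℂ)) (ψ : (ι → ZMod 2) → ℂ) :
    ψ ∈ fixedSpace Ms ↔ ∀ M ∈ Ms, M.mulVec ψ = ψ := by
  simp only [fixedSpace, Submodule.mem_iInf, LinearMap.mem_ker, LinearMap.sub_apply,
    Matrix.mulVecLin_apply, LinearMap.id_apply, sub_eq_zero]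



lemma mem_giL0_iff {ι A I : Type} [Fintype ι] [DecidableEq ι] [Fintype A] [Fintype I]
    (z : A → ι → ZMod 2) (x : I → ι → ZMod 2) (ψ : (ι → ZMod 2) → ℂ) :
    ψ ∈ giL0 ι A I z x ↔
      (∀ v, (∀ i, dotp v (x i) = 0) → ∀ s, dotp v s ≠ 0 → ψ s = 0) ∧
      (∀ u, (∀ α, dotp u (z α) = 0) → (∀ v, (∀ i, dotp v (x i) = 0) → dotp u v = 0) →
        ∀ s, ψ (s + u) = ψ s) := by
  rw [giL0, mem_fixedSpace_iff]
  constructor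
  · intro h
    refine ⟨fun v hv => (Zop_fixed_iff v ψ).1 (h _ (Or.inl ⟨v, hv, rfl⟩)),
      fun u hu1 hu2 => (Xop_fixed_iff u ψ).1 (h _ (Or.inr ⟨u, hu1, hu2, rfl⟩))⟩
  · rintro ⟨h1, h2⟩ M (⟨v, hv, rfl⟩ | ⟨u, hu1, hu2, rfl⟩)
    · exact (Zop_fixed_iff v ψ).2 (h1 v hv)
    · exact (Xop_fixed_iff u ψ).2 (h2 u hu1 hu2)

lemma mem_dualL0_iff {ι' A I : Type} [Fintype ι'] [DecidableEq ι'] [Fintype A] [Fintype I]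
    (z' : A → ι' → ZMod 2) (x' : I → ι' → ZMod 2) (φ : (ι' → ZMod 2) → ℂ) :
    φ ∈ dualL0 ι' A I z' x' ↔
      (∀ u', (∀ α, dotp u' (z' α) = 0) → ∀ s', φ (s' + u') = φ s') ∧
      (∀ v', v' ∈ Submodule.span (ZMod 2) (Set.range z') → (∀ i, dotp v' (x' i) = 0) →
        ∀ s', dotp v' s' ≠ 0 → φ s' = 0) := by
  rw [dualL0, mem_fixedSpace_iff]
  constructor
  · intro h
    refine ⟨fun u' hu' => (Xop_fixed_iff u' φ).1 (h _ (Or.inl ⟨u', hu', rfl⟩)),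
      fun v' hv1 hv2 => (Zop_fixed_iff v' φ).1 (h _ (Or.inr ⟨v', hv1, hv2, rfl⟩))⟩
  · rintro ⟨h1, h2⟩ M (⟨u', hu', rfl⟩ | ⟨v', hv1, hv2, rfl⟩)
    · exact (Xop_fixed_iff u' φ).2 (h1 u' hu')
    · exact (Zop_fixed_iff v' φ).2 (h2 v' hv1 hv2)

lemma dotp_lincomb {ι κ : Type} [Fintype ι] [Fintype κ] (a : κ → ZMod 2)
    (g : κ → ι → ZMod 2) (t : ι → ZMod 2) :
    dotp (∑ k, a k • g k) t = ∑ k, a k * dotp (g k) t := by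
  rw [dotp_sum_left]
  exact Finset.sum_congr rfl fun k _ => dotp_smul_left _ _ _

/-- `zeta z` as a linear map over `ZMod 2`. -/
def zetaL {ι A : Type} [Fintype ι] [Fintype A] (z : A → ι → ZMod 2) :
    (ι → ZMod 2) →ₗ[ZMod 2] (A → ZMod 2) where
  toFun s := fun α => dotp (z α) s
  map_add' s t := by funext α; exact dotp_add_right _ _ _
  map_smul' a s := by
    funext α
    simp only [RingHom.id_apply, Pi.smul_apply, smul_eq_mul]
    rw [dotp_comm, dotp_smul_left, dotp_comm]

lemma zetaL_apply {ι A : Type} [Fintype ι] [Fintype A] (z : A → ι → ZMod 2)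
    (s : ι → ZMod 2) (α : A) : zetaL z s α = dotp (z α) s := rfl

/-- Support predicate: `s` is orthogonal to everything orthogonal to all `x i`. -/
def Supp {ι I : Type} [Fintype ι] [Fintype I] (x : I → ι → ZMod 2) (s : ι → ZMod 2) : Prop :=
  ∀ v, (∀ i, dotp v (x i) = 0) → dotp v s = 0

lemma supp_zero {ι I : Type} [Fintype ι] [Fintype I] (x : I → ι → ZMod 2) :
    Supp x 0 := by
  intro v _
  simp [dotp]

lemma supp_add_iff {ι I : Type} [Fintype ι] [Fintype I] (x : I → ι → ZMod 2)
    {a : ι → ZMod 2} (ha : Supp x a) (b : ι → ZMod 2) : Supp x (b + a) ↔ Supp x b := by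
  constructor
  · intro h v hv
    have h1 := h v hv
    rw [dotp_add_right, ha v hv, add_zero] at h1
    exact h1
  · intro h v hv
    rw [dotp_add_right, ha v hv, h v hv, add_zero]

lemma supp_mem_span {ι I : Type} [Fintype ι] [Fintype I] (x : I → ι → ZMod 2)
    {s : ι → ZMod 2} (hs : Supp x s) :
    ∃ cc : I → ZMod 2, ∑ i, cc i • x i = s := by
  rw [← Submodule.mem_span_range_iff_exists_fun]
  by_contra h
  obtain ⟨v, hv1, hv2⟩ := sep_lemma _ _ h
  exact hv2 (hs v fun i => hv1 (x i) (Set.mem_range_self i))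

lemma span_supp {ι I : Type} [Fintype ι] [Fintype I] (x : I → ι → ZMod 2)
    (cc : I → ZMod 2) : Supp x (∑ i, cc i • x i) := by
  intro v hv
  rw [dotp_comm, dotp_lincomb]
  refine Finset.sum_eq_zero fun i _ => ?_
  rw [dotp_comm, hv i, mul_zero]

lemma sum_indicator_card {γ : Type} [Fintype γ] (P : γ → Prop) [DecidablePred P] :
    ∑ g, (if P g then (1 : ℂ) else 0) = (Nat.card {g // P g} : ℂ) := by
  rw [Finset.sum_boole, Nat.card_eq_fintype_card, Fintype.card_subtype]

/-- for a GI datum and a Kramers–Wannier dual datum, the symmetric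
sectors are invariant under the respective Hamiltonian local terms, and there is a
ℂ-linear inner-product-preserving isomorphism `L₀ ≅ L₀'` intertwining `Z_{z α}` with
`Z_{z' α}` and `X_{x i}` with `X_{x' i}`. -/
theorem statement10 (ι ι' A I : Type)
    [Fintype ι] [DecidableEq ι] [Fintype ι'] [DecidableEq ι'] [Fintype A] [Fintype I]
    (z : A → ι → ZMod 2) (x : I → ι → ZMod 2)
    (z' : A → ι' → ZMod 2) (x' : I → ι' → ZMod 2)
    (hdual : ∀ (α : A) (i : I), dotp (z α) (x i) = dotp (z' α) (x' i)) :
    (∀ α, ∀ ψ ∈ giL0 ι A I z x, (Zop (z α)).mulVec ψ ∈ giL0 ι A I z x) ∧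
    (∀ i, ∀ ψ ∈ giL0 ι A I z x, (Xop (x i)).mulVec ψ ∈ giL0 ι A I z x) ∧
    (∀ α, ∀ φ ∈ dualL0 ι' A I z' x', (Zop (z' α)).mulVec φ ∈ dualL0 ι' A I z' x') ∧
    (∀ i, ∀ φ ∈ dualL0 ι' A I z' x', (Xop (x' i)).mulVec φ ∈ dualL0 ι' A I z' x') ∧
    ∃ f : ((ι → ZMod 2) → ℂ) →ₗ[ℂ] ((ι' → ZMod 2) → ℂ),
      (∀ ψ ∈ giL0 ι A I z x, f ψ ∈ dualL0 ι' A I z' x') ∧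
      (∀ φ ∈ dualL0 ι' A I z' x', ∃ ψ ∈ giL0 ι A I z x, f ψ = φ) ∧
      (∀ ψ ∈ giL0 ι A I z x, ∀ φ ∈ giL0 ι A I z x,
        qInner (f ψ) (f φ) = qInner ψ φ) ∧
      (∀ α, ∀ ψ ∈ giL0 ι A I z x,
        f ((Zop (z α)).mulVec ψ) = (Zop (z' α)).mulVec (f ψ)) ∧
      (∀ i, ∀ ψ ∈ giL0 ι A I z x,
        f ((Xop (x i)).mulVec ψ) = (Xop (x' i)).mulVec (f ψ)) := by
  classical
  refine ⟨?_, ?_, ?_, ?_, ?_⟩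
  · -- primal Z invariance
    intro α ψ hψ
    rw [mem_giL0_iff] at hψ ⊢
    obtain ⟨hs, ht⟩ := hψ
    constructor
    · intro v hv s hvs
      rw [Zop_mulVec, hs v hv s hvs, mul_zero]
    · intro u hu1 hu2 s
      rw [Zop_mulVec, Zop_mulVec]
      have h1 : dotp (z α) (s + u) = dotp (z α) s := by
        rw [dotp_add_right, dotp_comm (z α) u, hu1 α, add_zero]
      rw [h1, ht u hu1 hu2 s]
  · -- primal X invariance
    intro i ψ hψ
    rw [mem_giL0_iff] at hψ ⊢
    obtain ⟨hs, ht⟩ := hψ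
    constructor
    · intro v hv s hvs
      rw [Xop_mulVec']
      exact hs v hv _ (by rwa [dotp_add_right, hv i, add_zero])
    · intro u hu1 hu2 s
      rw [Xop_mulVec', Xop_mulVec', add_right_comm]
      exact ht u hu1 hu2 (s + x i)
  · -- dual Z invariance
    intro α φ hφ
    rw [mem_dualL0_iff] at hφ ⊢
    obtain ⟨ht, hs⟩ := hφ
    constructor
    · intro u' hu' s'
      rw [Zop_mulVec, Zop_mulVec]
      have h1 : dotp (z' α) (s' + u') = dotp (z' α) s' := by
        rw [dotp_add_right, dotp_comm (z' α) u', hu' α, add_zero]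
      rw [h1, ht u' hu' s']
    · intro v' hv1 hv2 s' hvs
      rw [Zop_mulVec, hs v' hv1 hv2 s' hvs, mul_zero]
  · -- dual X invariance
    intro i φ hφ
    rw [mem_dualL0_iff] at hφ ⊢
    obtain ⟨ht, hs⟩ := hφ
    constructor
    · intro u' hu' s'
      rw [Xop_mulVec', Xop_mulVec', add_right_comm]
      exact ht u' hu' (s' + x' i)
    · intro v' hv1 hv2 s' hvs
      rw [Xop_mulVec']
      exact hs v' hv1 hv2 _ (by rwa [dotp_add_right, hv2 i, add_zero])
  · have hzx' : ∀ i : I, zetaL z' (x' i) = zetaL z (x i) := by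
      intro i; funext α; rw [zetaL_apply, zetaL_apply, hdual]
    set N0 : ℕ := Nat.card {u : ι → ZMod 2 // zetaL z u = 0 ∧ Supp x u} with hN0def
    set N0' : ℕ := Nat.card {u' : ι' → ZMod 2 // zetaL z' u' = 0} with hN0'def
    haveI : Nonempty {u : ι → ZMod 2 // zetaL z u = 0 ∧ Supp x u} :=
      ⟨⟨0, by simp, supp_zero x⟩⟩
    haveI : Nonempty {u' : ι' → ZMod 2 // zetaL z' u' = 0} := ⟨⟨0, by simp⟩⟩
    have hN0pos : 0 < N0 := Nat.card_pos
    have hN0'pos : 0 < N0' := Nat.card_pos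
    set c : ℝ := (Real.sqrt ((N0 : ℝ) * (N0' : ℝ)))⁻¹ with hcdef
    have hp : (0 : ℝ) < (N0 : ℝ) * (N0' : ℝ) := by positivity
    have hcreal : c * c * ((N0 : ℝ) * (N0' : ℝ)) = 1 := by
      rw [hcdef, ← mul_inv, Real.mul_self_sqrt hp.le, inv_mul_cancel₀ hp.ne']
    have hc2 : (c : ℂ) * (c : ℂ) * ((N0 : ℂ) * (N0' : ℂ)) = 1 := by
      exact_mod_cast congrArg (fun r : ℝ => (r : ℂ)) hcreal
    set f : ((ι → ZMod 2) → ℂ) →ₗ[ℂ] ((ι' → ZMod 2) → ℂ) :=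
      (Matrix.of fun (s' : ι' → ZMod 2) (s : ι → ZMod 2) =>
        if zetaL z s = zetaL z' s' then (c : ℂ) else 0).mulVecLin with hfdef
    have hf : ∀ ψ s', f ψ s' = (c : ℂ) * ∑ s, (if zetaL z s = zetaL z' s' then ψ s else 0) := by
      intro ψ s'
      rw [hfdef]
      simp only [Matrix.mulVecLin_apply, Matrix.mulVec, dotProduct, Matrix.of_apply]
      rw [Finset.mul_sum]
      exact Finset.sum_congr rfl fun s _ => by split_ifs <;> ring
    have hcard' : ∀ m : A → ZMod 2, (∃ r', zetaL z' r' = m) →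
        ∑ s', (if zetaL z' s' = m then (1 : ℂ) else 0) = (N0' : ℂ) := by
      rintro m ⟨r', rfl⟩
      rw [← Equiv.sum_comp (Equiv.addRight r')
        (fun s' => if zetaL z' s' = zetaL z' r' then (1 : ℂ) else 0)]
      have h1 : ∀ u' : ι' → ZMod 2,
          (if zetaL z' (u' + r') = zetaL z' r' then (1 : ℂ) else 0)
          = (if zetaL z' u' = 0 then (1 : ℂ) else 0) := by
        intro u'
        refine if_congr ?_ rfl rfl
        rw [map_add, add_eq_right]
      exact (Finset.sum_congr rfl fun u' _ => h1 u').trans (by rw [sum_indicator_card, hN0'def])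
    have him : ∀ s, Supp x s → ∃ r', zetaL z' r' = zetaL z s := by
      intro s hs
      obtain ⟨cc, hcc⟩ := supp_mem_span x hs
      refine ⟨∑ i, cc i • x' i, ?_⟩
      rw [map_sum, ← hcc, map_sum]
      exact Finset.sum_congr rfl fun i _ => by rw [map_smul, map_smul, hzx' i]
    refine ⟨f, ?_, ?_, ?_, ?_, ?_⟩
    · -- maps into dual L0
      intro ψ hψ
      rw [mem_dualL0_iff]
      constructor
      · intro u' hu' s'
        have hz'u' : zetaL z' u' = 0 :=
          funext fun α => by rw [zetaL_apply, dotp_comm]; exact hu' α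
        have h1 : zetaL z' (s' + u') = zetaL z' s' := by rw [map_add, hz'u', add_zero]
        rw [hf, hf, h1]
      · intro v' hv1 hv2 s' hvs
        rw [hf, mul_eq_zero]
        right
        refine Finset.sum_eq_zero fun s _ => ?_
        split_ifs with h
        · obtain ⟨a, ha⟩ := (Submodule.mem_span_range_iff_exists_fun (ZMod 2)).1 hv1
          have hwx : ∀ i, dotp (∑ α, a α • z α) (x i) = 0 := by
            intro i
            rw [dotp_lincomb]
            calc ∑ α, a α * dotp (z α) (x i) = ∑ α, a α * dotp (z' α) (x' i) :=
                  Finset.sum_congr rfl fun α _ => by rw [hdual]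
              _ = dotp (∑ α, a α • z' α) (x' i) := (dotp_lincomb _ _ _).symm
              _ = 0 := by rw [ha]; exact hv2 i
          have hws : dotp (∑ α, a α • z α) s = dotp v' s' := by
            rw [dotp_lincomb, ← ha, dotp_lincomb]
            refine Finset.sum_congr rfl fun α _ => ?_
            rw [show dotp (z α) s = dotp (z' α) s' from by
              rw [← zetaL_apply, h, zetaL_apply]]
          exact ((mem_giL0_iff z x ψ).1 hψ).1 _ hwx s (by rwa [hws])
        · rfl
    · -- surjectivity
      intro φ hφ
      obtain ⟨hφt, hφs⟩ := (mem_dualL0_iff z' x' φ).1 hφ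
      have hfiber : ∀ (m : A → ZMod 2) (s₀' : ι' → ZMod 2), zetaL z' s₀' = m →
          ∑ t', (if zetaL z' t' = m then φ t' else 0) = (N0' : ℂ) * φ s₀' := by
        rintro m s₀' rfl
        rw [← Equiv.sum_comp (Equiv.addRight s₀')
          (fun t' => if zetaL z' t' = zetaL z' s₀' then φ t' else 0)]
        have h1 : ∀ u' : ι' → ZMod 2,
            (if zetaL z' (u' + s₀') = zetaL z' s₀' then φ (u' + s₀') else 0)
            = (if zetaL z' u' = 0 then (1 : ℂ) else 0) * φ s₀' := by
          intro u'
          by_cases hu : zetaL z' u' = 0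
          · have hcond : zetaL z' (u' + s₀') = zetaL z' s₀' := by rw [map_add, hu, zero_add]
            have hval : φ (u' + s₀') = φ s₀' := by
              rw [add_comm]
              exact hφt u' (fun α => by
                rw [dotp_comm, ← zetaL_apply, hu]; rfl) s₀'
            rw [if_pos hcond, if_pos hu, hval, one_mul]
          · have hcond : ¬ (zetaL z' (u' + s₀') = zetaL z' s₀') := by
              rw [map_add, add_eq_right]; exact hu
            rw [if_neg hcond, if_neg hu, zero_mul]
        exact (Finset.sum_congr rfl fun u' _ => h1 u').trans
          (by rw [← Finset.sum_mul, sum_indicator_card, hN0'def])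
      set ψ : (ι → ZMod 2) → ℂ := fun s =>
        if Supp x s then (c : ℂ) * ∑ t', (if zetaL z' t' = zetaL z s then φ t' else 0) else 0
        with hψdef
      have hψmem : ψ ∈ giL0 ι A I z x := by
        rw [mem_giL0_iff]
        constructor
        · intro v hv s hvs
          have hns : ¬ Supp x s := fun hsupp => hvs (hsupp v hv)
          simp only [hψdef, if_neg hns]
        · intro u hu1 hu2 s
          have hsu : Supp x u := fun v hv => by rw [dotp_comm]; exact hu2 v hv
          have hzu : zetaL z u = 0 :=
            funext fun α => by rw [zetaL_apply, dotp_comm]; exact hu1 α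
          simp only [hψdef, map_add, hzu, add_zero]
          rw [if_congr (supp_add_iff x hsu s) rfl rfl]
      refine ⟨ψ, hψmem, ?_⟩
      funext s'
      rw [hf]
      have hterm : ∀ s, (if zetaL z s = zetaL z' s' then ψ s else 0)
          = (if zetaL z s = zetaL z' s' ∧ Supp x s then (1 : ℂ) else 0)
            * ((c : ℂ) * ((N0' : ℂ) * φ s')) := by
        intro s
        by_cases h1 : zetaL z s = zetaL z' s'
        · by_cases h2 : Supp x s
          · rw [if_pos h1, if_pos ⟨h1, h2⟩, one_mul]
            have hval : ψ s = (c : ℂ) * ∑ t', (if zetaL z' t' = zetaL z s then φ t' else 0) := by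
              simp only [hψdef]; rw [if_pos h2]
            rw [hval, hfiber (zetaL z s) s' h1.symm]
          · have hval : ψ s = 0 := by simp only [hψdef]; rw [if_neg h2]
            rw [if_pos h1, hval, if_neg (fun hc => h2 hc.2), zero_mul]
        · rw [if_neg h1, if_neg (fun hc => h1 hc.1), zero_mul]
      simp only [hterm]
      rw [← Finset.sum_mul]
      by_cases hφ0 : φ s' = 0
      · rw [hφ0]; ring
      · have hmemspan : zetaL z' s' ∈
            Submodule.span (ZMod 2) (Set.range fun i => zetaL z (x i)) := by
          by_contra hmem
          obtain ⟨a, ha1, ha2⟩ := sep_lemma _ _ hmem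
          apply hφ0
          have hv'span : (∑ α, a α • z' α) ∈ Submodule.span (ZMod 2) (Set.range z') :=
            Submodule.sum_mem _ fun α _ =>
              Submodule.smul_mem _ _ (Submodule.subset_span ⟨α, rfl⟩)
          have hv'x : ∀ i, dotp (∑ α, a α • z' α) (x' i) = 0 := by
            intro i
            rw [dotp_lincomb]
            calc ∑ α, a α * dotp (z' α) (x' i) = ∑ α, a α * dotp (z α) (x i) :=
                  Finset.sum_congr rfl fun α _ => by rw [hdual]
              _ = dotp a (zetaL z (x i)) := rfl
              _ = 0 := ha1 _ ⟨i, rfl⟩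
          have hv's' : dotp (∑ α, a α • z' α) s' ≠ 0 := by
            rw [dotp_lincomb]
            exact ha2
          exact hφs _ hv'span hv'x s' hv's'
        obtain ⟨cc, hcc⟩ := (Submodule.mem_span_range_iff_exists_fun (ZMod 2)).1 hmemspan
        have hs₀supp : Supp x (∑ i, cc i • x i) := span_supp x cc
        have hs₀ζ : zetaL z (∑ i, cc i • x i) = zetaL z' s' := by
          rw [map_sum, ← hcc]
          exact Finset.sum_congr rfl fun i _ => by rw [map_smul]
        have hcount : ∑ s, (if zetaL z s = zetaL z' s' ∧ Supp x s then (1 : ℂ) else 0)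
            = (N0 : ℂ) := by
          rw [← Equiv.sum_comp (Equiv.addRight (∑ i, cc i • x i))
            (fun s => if zetaL z s = zetaL z' s' ∧ Supp x s then (1 : ℂ) else 0)]
          have h1 : ∀ u : ι → ZMod 2,
              (if zetaL z (u + ∑ i, cc i • x i) = zetaL z' s' ∧ Supp x (u + ∑ i, cc i • x i)
                then (1 : ℂ) else 0)
              = (if zetaL z u = 0 ∧ Supp x u then (1 : ℂ) else 0) := by
            intro u
            refine if_congr ?_ rfl rfl
            rw [supp_add_iff x hs₀supp u, map_add, hs₀ζ, add_eq_right]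
          exact (Finset.sum_congr rfl fun u _ => h1 u).trans (by rw [sum_indicator_card, hN0def])
        rw [hcount]
        linear_combination (φ s') * hc2
    · -- isometry
      intro ψ hψ φ hφ
      obtain ⟨hψ1, hψ2⟩ := (mem_giL0_iff z x ψ).1 hψ
      obtain ⟨hφ1, hφ2⟩ := (mem_giL0_iff z x φ).1 hφ
      rw [qInner, qInner]
      have expand : ∀ s', (starRingEnd ℂ) (f ψ s') * (f φ s')
          = ∑ s, ∑ t, ((c : ℂ) * (c : ℂ)) *
            (if zetaL z s = zetaL z' s' ∧ zetaL z t = zetaL z' s'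
              then (starRingEnd ℂ) (ψ s) * φ t else 0) := by
        intro s'
        rw [hf, hf, map_mul, map_sum, Complex.conj_ofReal, mul_mul_mul_comm,
          Finset.sum_mul_sum, Finset.mul_sum]
        refine Finset.sum_congr rfl fun s _ => ?_
        rw [Finset.mul_sum]
        refine Finset.sum_congr rfl fun t _ => ?_
        rw [apply_ite (starRingEnd ℂ), map_zero, ite_zero_mul_ite_zero]
      simp only [expand]
      rw [Finset.sum_comm]
      refine Finset.sum_congr rfl fun s _ => ?_
      rw [Finset.sum_comm]
      by_cases hψ0 : ψ s = 0
      · simp [hψ0]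
      · have hSs : Supp x s := by
          by_contra hns
          rw [Supp] at hns
          push_neg at hns
          obtain ⟨v, hv, hvs⟩ := hns
          exact hψ0 (hψ1 v hv s hvs)
        have hNs' : ∑ s', (if zetaL z s = zetaL z' s' then (1 : ℂ) else 0) = (N0' : ℂ) := by
          rw [Finset.sum_congr rfl fun s' _ => if_congr eq_comm rfl rfl]
          exact hcard' _ (him s hSs)
        rw [← Equiv.sum_comp (Equiv.addRight s) (fun t => ∑ s', ((c : ℂ) * (c : ℂ)) *
          (if zetaL z s = zetaL z' s' ∧ zetaL z t = zetaL z' s'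
            then (starRingEnd ℂ) (ψ s) * φ t else 0))]
        simp only [Equiv.coe_addRight]
        have hterm2 : ∀ u : ι → ZMod 2, (∑ s', ((c : ℂ) * (c : ℂ)) *
            (if zetaL z s = zetaL z' s' ∧ zetaL z (u + s) = zetaL z' s'
              then (starRingEnd ℂ) (ψ s) * φ (u + s) else 0))
            = ((c : ℂ) * (c : ℂ)) * ((if zetaL z u = 0 ∧ Supp x u then (1 : ℂ) else 0)
              * ((N0' : ℂ) * ((starRingEnd ℂ) (ψ s) * φ s))) := by
          intro u
          rw [← Finset.mul_sum]
          congr 1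
          by_cases hu1 : zetaL z u = 0
          · by_cases hu2 : Supp x u
            · have hφu : φ (u + s) = φ s := by
                rw [add_comm]
                exact hφ2 u
                  (fun α => by rw [dotp_comm, ← zetaL_apply, hu1]; rfl)
                  (fun v hv => by rw [dotp_comm]; exact hu2 v hv) s
              have hcond : ∀ s' : ι' → ZMod 2,
                  (zetaL z s = zetaL z' s' ∧ zetaL z (u + s) = zetaL z' s')
                  ↔ (zetaL z s = zetaL z' s') := by
                intro s'
                rw [map_add, hu1, zero_add, and_self]
              rw [if_pos ⟨hu1, hu2⟩, one_mul]
              calc ∑ s', (if zetaL z s = zetaL z' s' ∧ zetaL z (u + s) = zetaL z' s'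
                    then (starRingEnd ℂ) (ψ s) * φ (u + s) else 0)
                  = ∑ s', (if zetaL z s = zetaL z' s' then (1 : ℂ) else 0)
                      * ((starRingEnd ℂ) (ψ s) * φ s) := by
                    refine Finset.sum_congr rfl fun s' _ => ?_
                    rw [if_congr (hcond s') rfl rfl, hφu]
                    split_ifs <;> ring
                _ = (N0' : ℂ) * ((starRingEnd ℂ) (ψ s) * φ s) := by
                    rw [← Finset.sum_mul, hNs']
            · have hφ0' : φ (u + s) = 0 := by
                have hns : ¬ Supp x u := hu2
                rw [Supp] at hns
                push_neg at hns
                obtain ⟨v, hv, hvu⟩ := hns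
                refine hφ1 v hv _ ?_
                intro h0
                exact hvu (by rwa [dotp_add_right, hSs v hv, add_zero] at h0)
              rw [if_neg (fun hc => hu2 hc.2), zero_mul]
              refine Finset.sum_eq_zero fun s' _ => ?_
              rw [hφ0', mul_zero, ite_self]
          · rw [if_neg (fun hc => hu1 hc.1), zero_mul]
            refine Finset.sum_eq_zero fun s' _ => ?_
            rw [if_neg]
            rintro ⟨h1, h2⟩
            rw [map_add, h1, add_eq_right] at h2
            exact hu1 h2
        refine (Finset.sum_congr rfl fun u _ => hterm2 u).trans ?_
        rw [← Finset.mul_sum, ← Finset.sum_mul, sum_indicator_card, ← hN0def]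
        linear_combination ((starRingEnd ℂ) (ψ s) * φ s) * hc2
    · -- Z intertwining
      intro α ψ _
      funext s'
      have hterm : ∀ s, (if zetaL z s = zetaL z' s' then (Zop (z α)).mulVec ψ s else 0)
          = (-1 : ℂ) ^ (dotp (z' α) s').val * (if zetaL z s = zetaL z' s' then ψ s else 0) := by
        intro s
        split_ifs with h
        · rw [Zop_mulVec, show dotp (z α) s = dotp (z' α) s' from by
            rw [← zetaL_apply, h, zetaL_apply]]
        · rw [mul_zero]
      rw [hf, Zop_mulVec, hf]
      simp only [hterm]
      rw [← Finset.mul_sum]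
      ring
    · -- X intertwining
      intro i ψ _
      funext s'
      rw [Xop_mulVec' (x' i) (f ψ) s', hf, hf]
      congr 1
      rw [← Equiv.sum_comp (Equiv.addRight (x i))
        (fun t => if zetaL z t = zetaL z' (s' + x' i) then ψ t else 0)]
      refine Finset.sum_congr rfl fun s _ => ?_
      simp only [Equiv.coe_addRight]
      rw [Xop_mulVec']
      refine if_congr ?_ rfl rfl
      rw [map_add, map_add, hzx' i, add_left_inj]
end
end
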